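/- Let n ≥ 2 and let A = (a_{ij}) be an n×n matrix of distinct indeterminates over a field of characteristic ≠ 2. For any indices i < k and j < l, the differential operator d_{ij}d_{kl} + d_{il}d_{kj} (the 2×2 permanent of the corresponding submatrix of dual variables) annihilates det(A) under the contraction action of partial derivatives on polynomials. -/

import Mathlib

open MvPolynomial

/-- The determinant of the generic `n × n` matrix of indeterminates. -/
noncomputable def genericDet (n : ℕ) (K : Type) [Field K] :
    MvPolynomial (Fin n × Fin n) K :=
  Matrix.det (Matrix.of fun i j : Fin n => X (i, j))

section Aux

variable {K : Type} [Field K] {n : ℕ}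

private lemma prod_X_eq (s : Finset (Fin n)) (g : Fin n → Fin n × Fin n) :
    (∏ c ∈ s, (X (g c) : MvPolynomial (Fin n × Fin n) K)) =
      monomial (∑ c ∈ s, Finsupp.single (g c) 1) 1 := by
  classical
  induction s using Finset.cons_induction with
  | empty => simp
  | cons a s ha ih =>
      rw [Finset.prod_cons, Finset.sum_cons, ih, X, monomial_mul, one_mul]

/-- The exponent finsupp of the monomial corresponding to a permutation. -/
private noncomputable def expOf (σ : Equiv.Perm (Fin n)) : (Fin n × Fin n) →₀ ℕ :=
  ∑ c, Finsupp.single (σ c, c) 1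

private lemma expOf_apply (σ : Equiv.Perm (Fin n)) (p q : Fin n) :
    expOf σ (p, q) = if σ q = p then 1 else 0 := by
  classical
  rw [expOf, Finset.sum_apply']
  rw [Finset.sum_eq_single q]
  · rw [Finsupp.single_apply]
    by_cases h : σ q = p <;> simp [h]
  · intro b _ hb
    rw [Finsupp.single_apply, if_neg]
    exact fun hc => hb (congrArg Prod.snd hc)
  · simp

private lemma genericDet_eq :
    genericDet n K = ∑ σ : Equiv.Perm (Fin n),
      monomial (expOf σ) (((Equiv.Perm.sign σ : ℤ) : K)) := by
  rw [genericDet, Matrix.det_apply]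
  refine Finset.sum_congr rfl fun σ _ => ?_
  show Equiv.Perm.sign σ • (∏ c, (X ((σ c), c) : MvPolynomial (Fin n × Fin n) K)) = _
  rw [prod_X_eq Finset.univ (fun c => ((σ c), c)), Units.smul_def,
    ← map_zsmul (monomial (∑ c, Finsupp.single ((σ c), c) 1)) ((Equiv.Perm.sign σ : ℤ)) (1 : K),
    zsmul_eq_mul, mul_one]
  rfl

end Aux

/-- each `2 × 2` permanent of the dual variables annihilates the
determinant of the generic matrix. -/
theorem permanent_annihilates_det (K : Type) [Field K] (h2 : (2 : K) ≠ 0)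
    (n : ℕ) (hn : 2 ≤ n) (i k j l : Fin n) (hik : i < k) (hjl : j < l) :
    pderiv (i, j) (pderiv (k, l) (genericDet n K)) +
      pderiv (i, l) (pderiv (k, j) (genericDet n K)) = 0 := by
  classical
  have hik' : i ≠ k := hik.ne
  have hjl' : j ≠ l := hjl.ne
  rw [genericDet_eq, map_sum, map_sum, map_sum, map_sum]
  -- reindex the second sum by σ ↦ σ * swap j l
  have hre : (∑ σ : Equiv.Perm (Fin n),
        pderiv (i, l) (pderiv (k, j) (monomial (expOf σ) (((Equiv.Perm.sign σ : ℤ) : K)))))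
      = ∑ σ : Equiv.Perm (Fin n),
        pderiv (i, l) (pderiv (k, j)
          (monomial (expOf (σ * Equiv.swap j l))
            (((Equiv.Perm.sign (σ * Equiv.swap j l) : ℤ) : K)))) :=
    (Equiv.sum_comp (Equiv.mulRight (Equiv.swap j l))
      (fun σ => pderiv (i, l) (pderiv (k, j)
        (monomial (expOf σ) (((Equiv.Perm.sign σ : ℤ) : K)))))).symm
  rw [hre, ← Finset.sum_add_distrib]
  refine Finset.sum_eq_zero fun σ _ => ?_
  set σ' := σ * Equiv.swap j l with hσ'
  have hσ'j : σ' j = σ l := by simp [hσ', Equiv.Perm.mul_apply]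
  have hσ'l : σ' l = σ j := by simp [hσ', Equiv.Perm.mul_apply]
  rw [pderiv_monomial, pderiv_monomial, pderiv_monomial, pderiv_monomial]
  -- compute the relevant exponents
  have hkl_ij : ((k, l) : Fin n × Fin n) ≠ (i, j) := by
    intro h; exact hik' (congrArg Prod.fst h).symm
  have hkj_il : ((k, j) : Fin n × Fin n) ≠ (i, l) := by
    intro h; exact hik' (congrArg Prod.fst h).symm
  have e1 : ((expOf σ - Finsupp.single (k, l) 1 : (Fin n × Fin n) →₀ ℕ)) (i, j)
      = expOf σ (i, j) := by
    rw [Finsupp.tsub_apply, Finsupp.single_eq_of_ne' hkl_ij]; rfl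
  have e2 : ((expOf σ' - Finsupp.single (k, j) 1 : (Fin n × Fin n) →₀ ℕ)) (i, l)
      = expOf σ' (i, l) := by
    rw [Finsupp.tsub_apply, Finsupp.single_eq_of_ne' hkj_il]; rfl
  by_cases hk : σ l = k
  · by_cases hi : σ j = i
    · -- the interesting case: the two monomials cancel
      have hRl : l ∈ Finset.univ.erase j :=
        Finset.mem_erase.mpr ⟨hjl'.symm, Finset.mem_univ l⟩
      set R : (Fin n × Fin n) →₀ ℕ :=
        ∑ c ∈ (Finset.univ.erase j).erase l, Finsupp.single (σ c, c) 1 with hR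
      have hsplit : ∀ τ : Equiv.Perm (Fin n),
          expOf τ = Finsupp.single (τ j, j) 1 + Finsupp.single (τ l, l) 1
            + ∑ c ∈ (Finset.univ.erase j).erase l, Finsupp.single (τ c, c) 1 := by
        intro τ
        rw [expOf, ← Finset.add_sum_erase _ _ (Finset.mem_univ j),
          ← Finset.add_sum_erase _ _ hRl, add_assoc]
      have hs1 : expOf σ = (R + Finsupp.single (i, j) 1) + Finsupp.single (k, l) 1 := by
        rw [hsplit σ, hi, hk, hR]; abel
      have hRσ' : (∑ c ∈ (Finset.univ.erase j).erase l, Finsupp.single (σ' c, c) 1) = R := by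
        refine Finset.sum_congr rfl fun c hc => ?_
        have hcl : c ≠ l := (Finset.mem_erase.mp hc).1
        have hcj : c ≠ j := (Finset.mem_erase.mp (Finset.mem_erase.mp hc).2).1
        rw [hσ', Equiv.Perm.mul_apply, Equiv.swap_apply_of_ne_of_ne hcj hcl]
      have hs2 : expOf σ' = (R + Finsupp.single (i, l) 1) + Finsupp.single (k, j) 1 := by
        rw [hsplit σ', hσ'j, hσ'l, hk, hi, hRσ']; abel
      have m1 : expOf σ - Finsupp.single (k, l) 1 - Finsupp.single (i, j) 1 = R := by
        rw [hs1, add_tsub_cancel_right, add_tsub_cancel_right]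
      have m2 : expOf σ' - Finsupp.single (k, j) 1 - Finsupp.single (i, l) 1 = R := by
        rw [hs2, add_tsub_cancel_right, add_tsub_cancel_right]
      have c1 : expOf σ (k, l) = 1 := by rw [expOf_apply, if_pos hk]
      have c2 : expOf σ' (k, j) = 1 := by rw [expOf_apply, if_pos (hσ'j.trans hk)]
      have c3 : expOf σ (i, j) = 1 := by rw [expOf_apply, if_pos hi]
      have c4 : expOf σ' (i, l) = 1 := by rw [expOf_apply, if_pos (hσ'l.trans hi)]
      have hsign : ((Equiv.Perm.sign σ' : ℤ) : K) = -((Equiv.Perm.sign σ : ℤ) : K) := by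
        rw [hσ', Equiv.Perm.sign_mul, Equiv.Perm.sign_swap hjl']
        push_cast
        ring
      rw [e1, e2, m1, m2, c1, c2, c3, c4, hsign, ← map_add]
      norm_num
    · -- σ j ≠ i : both terms vanish via the inner coefficient
      have c3 : expOf σ (i, j) = 0 := by rw [expOf_apply, if_neg hi]
      have c4 : expOf σ' (i, l) = 0 := by
        rw [expOf_apply, hσ'l, if_neg hi]
      rw [e1, e2, c3, c4]
      norm_num
  · -- σ l ≠ k : both terms vanish via the outer coefficient
    have c1 : expOf σ (k, l) = 0 := by rw [expOf_apply, if_neg hk]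
    have c2 : expOf σ' (k, j) = 0 := by rw [expOf_apply, hσ'j, if_neg hk]
    rw [c1, c2]
    norm_num
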